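/- There is no CSS stabilizer code on six qubits that encodes one logical qubit and corrects an arbitrary single-qubit error. Precisely: there do not exist subspaces C_X, C_Z ⊆ (ZMod 2)^6 such that (i) a·b = 0 for all a ∈ C_X, b ∈ C_Z, (ii) dim C_X + dim C_Z = 5, and (iii) every vector of Hamming weight ≤ 2 in C_Z^⊥ lies in C_X and every vector of Hamming weight ≤ 2 in C_X^⊥ lies in C_Z. -/

import Mathlib

/-- Hamming weight of a binary vector. -/
def hammingWt {n : ℕ} (v : Fin n → ZMod 2) : ℕ :=
  (Finset.univ.filter fun i => v i ≠ 0).card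

/-- Standard bilinear form `a·b = ∑ i, a i * b i` on `(ZMod 2)^n`. -/
def bform {n : ℕ} (a b : Fin n → ZMod 2) : ZMod 2 :=
  ∑ i, a i * b i

open Module Finset

lemma bform_comm {n : ℕ} (a b : Fin n → ZMod 2) : bform a b = bform b a := by
  simp [bform, mul_comm]

lemma bform_add_left {n : ℕ} (a b c : Fin n → ZMod 2) :
    bform (a + b) c = bform a c + bform b c := by
  simp [bform, add_mul, Finset.sum_add_distrib]

lemma bform_smul_left {n : ℕ} (r : ZMod 2) (a c : Fin n → ZMod 2) :
    bform (r • a) c = r * bform a c := by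
  simp [bform, Finset.mul_sum, mul_assoc]

lemma bform_single {n : ℕ} (i : Fin n) (c : Fin n → ZMod 2) :
    bform (Pi.single i 1) c = c i := by
  simp [bform, Pi.single_apply, ite_mul]

lemma zmod2_cases : ∀ x : ZMod 2, x = 0 ∨ x = 1 := by decide

lemma zmod2_add_eq_zero : ∀ x y : ZMod 2, x + y = 0 → x = y := by decide

lemma zmod2_ne_zero : ∀ x : ZMod 2, x ≠ 0 → x = 1 := by decide

lemma filter_eq_of_iff {n : ℕ} (p q : Fin n → Prop) [DecidablePred p] [DecidablePred q]
    (h : ∀ i, p i ↔ q i) : Finset.univ.filter p = Finset.univ.filter q := by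
  ext i; simp [h i]

lemma hammingWt_eq_card {n : ℕ} (v : Fin n → ZMod 2) (q : Fin n → Prop) [DecidablePred q]
    (h : ∀ i, v i ≠ 0 ↔ q i) : hammingWt v = (Finset.univ.filter q).card := by
  unfold hammingWt
  rw [filter_eq_of_iff _ q h]

lemma hammingWt_single {n : ℕ} (i : Fin n) : hammingWt (Pi.single i (1 : ZMod 2)) = 1 := by
  rw [hammingWt_eq_card _ (fun j => j = i) (fun j => by
    by_cases h : j = i <;> simp [Pi.single_apply, h])]
  rw [Finset.filter_eq']
  simp

lemma hammingWt_pair {n : ℕ} {i j : Fin n} (hij : i ≠ j) :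
    hammingWt (Pi.single i (1 : ZMod 2) + Pi.single j 1) = 2 := by
  rw [hammingWt_eq_card _ (fun k => k = i ∨ k = j) (fun k => by
    by_cases h1 : k = i <;> by_cases h2 : k = j <;>
      simp [Pi.single_apply, h1, h2, hij])]
  rw [show (Finset.univ.filter fun k : Fin n => k = i ∨ k = j) = {i, j} by ext k; simp]
  rw [Finset.card_insert_of_notMem (by simp [hij]), Finset.card_singleton]

def bformL {n : ℕ} (c : Fin n → ZMod 2) : (Fin n → ZMod 2) →ₗ[ZMod 2] ZMod 2 where
  toFun x := bform x c
  map_add' a b := bform_add_left a b c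
  map_smul' r a := bform_smul_left r a c

lemma exists_t (CX CZ : Submodule (ZMod 2) (Fin 6 → ZMod 2))
    (hrk : finrank (ZMod 2) CX + finrank (ZMod 2) CZ = 5) :
    ∃ t, (∀ c ∈ CZ, bform t c = 0) ∧ t ∉ CX := by
  by_contra h
  push_neg at h
  set b := finrank (ZMod 2) CZ with hb
  let B := Module.finBasis (ZMod 2) CZ
  let L : (Fin 6 → ZMod 2) →ₗ[ZMod 2] (Fin b → ZMod 2) :=
    LinearMap.pi (fun k => bformL (B k).val)
  have hker : LinearMap.ker L ≤ CX := by
    intro x hx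
    apply h x
    intro c hc
    have hsum : (⟨c, hc⟩ : CZ) = ∑ k, B.repr ⟨c, hc⟩ k • B k := (B.sum_repr ⟨c, hc⟩).symm
    have hc' : c = ∑ k, B.repr ⟨c, hc⟩ k • (B k).val := by
      have := congrArg (Subtype.val) hsum
      simpa only [Submodule.coe_sum, Submodule.coe_smul] using this
    have hz : ∀ k, bform (B k).val x = 0 := by
      intro k
      have := congrFun (LinearMap.mem_ker.mp hx) k
      simpa [L, bformL, bform_comm] using this
    rw [bform_comm, hc']
    have : bform (∑ k, B.repr ⟨c, hc⟩ k • (B k).val) x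
        = ∑ k, bformL x (B.repr ⟨c, hc⟩ k • (B k).val) := map_sum (bformL x) _ _
    rw [this]
    simp only [map_smul, smul_eq_mul]
    have : ∀ k, bformL x ((B k).val) = 0 := fun k => hz k
    simp [this]
  have h1 : finrank (ZMod 2) (LinearMap.ker L) ≤ finrank (ZMod 2) CX :=
    Submodule.finrank_mono hker
  have h2 : finrank (ZMod 2) (LinearMap.range L) + finrank (ZMod 2) (LinearMap.ker L) = 6 := by
    rw [LinearMap.finrank_range_add_finrank_ker]
    simp [Module.finrank_fin_fun]
  have h3 : finrank (ZMod 2) (LinearMap.range L) ≤ b := by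
    have := Submodule.finrank_le (LinearMap.range L)
    simpa [Module.finrank_fin_fun] using this
  omega

lemma span_two (CX : Submodule (ZMod 2) (Fin 6 → ZMod 2))
    (h2 : finrank (ZMod 2) CX = 2) :
    ∃ u v, u ∈ CX ∧ v ∈ CX ∧ ∀ c ∈ CX, ∃ r s : ZMod 2, c = r • u + s • v := by
  let B := finBasisOfFinrankEq (ZMod 2) CX h2
  refine ⟨(B 0).val, (B 1).val, (B 0).2, (B 1).2, fun c hc => ?_⟩
  refine ⟨B.repr ⟨c, hc⟩ 0, B.repr ⟨c, hc⟩ 1, ?_⟩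
  have := congrArg Subtype.val (B.sum_repr ⟨c, hc⟩)
  rw [Fin.sum_univ_two] at this
  simpa using this.symm

lemma span_one (CX : Submodule (ZMod 2) (Fin 6 → ZMod 2))
    (h1 : finrank (ZMod 2) CX = 1) :
    ∃ u, u ∈ CX ∧ u ≠ 0 ∧ ∀ c ∈ CX, ∃ r : ZMod 2, c = r • u := by
  let B := finBasisOfFinrankEq (ZMod 2) CX h1
  refine ⟨(B 0).val, (B 0).2, by simpa using B.ne_zero 0, fun c hc => ?_⟩
  refine ⟨B.repr ⟨c, hc⟩ 0, ?_⟩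
  have := congrArg Subtype.val (B.sum_repr ⟨c, hc⟩)
  rw [Fin.sum_univ_one] at this
  simpa using this.symm

lemma main_lemma (CX CZ : Submodule (ZMod 2) (Fin 6 → ZMod 2))
    (horth : ∀ a ∈ CX, ∀ b ∈ CZ, bform a b = 0)
    (hrk : finrank (ZMod 2) CX + finrank (ZMod 2) CZ = 5)
    (condZ : ∀ v : Fin 6 → ZMod 2, hammingWt v ≤ 2 →
        (∀ c ∈ CZ, bform v c = 0) → v ∈ CX)
    (condX : ∀ v : Fin 6 → ZMod 2, hammingWt v ≤ 2 →
        (∀ c ∈ CX, bform v c = 0) → v ∈ CZ)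
    (ha : finrank (ZMod 2) CX ≤ 2) : False := by
  obtain ⟨t, ht, htn⟩ := exists_t CX CZ hrk
  interval_cases h : finrank (ZMod 2) CX
  · -- rank 0
    have hbot : CX = ⊥ := Submodule.finrank_eq_zero.mp h
    have he : ∀ i : Fin 6, Pi.single i (1 : ZMod 2) ∈ CZ := by
      intro i
      refine condX _ (by rw [hammingWt_single]; omega) ?_
      intro c hc
      rw [hbot, Submodule.mem_bot] at hc
      subst hc
      simp [bform]
    have hxmem : ∀ x : Fin 6 → ZMod 2, x ∈ CZ := by
      intro x
      have hx : x = ∑ i, x i • Pi.single i (1 : ZMod 2) := by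
        funext j
        rw [Finset.sum_apply]
        simp [Pi.single_apply]
      rw [hx]
      exact Submodule.sum_mem _ fun i _ => CZ.smul_mem _ (he i)
    have htop : (⊤ : Submodule (ZMod 2) (Fin 6 → ZMod 2)) ≤ CZ := fun x _ => hxmem x
    have h6 : (6 : ℕ) ≤ finrank (ZMod 2) CZ := by
      have := Submodule.finrank_mono htop
      rwa [finrank_top, Module.finrank_fin_fun] at this
    omega
  · -- rank 1
    obtain ⟨u, hu, hune, hspan⟩ := span_one CX h
    have C1 : ∀ i j : Fin 6, u i = u j → t i = t j := by
      intro i j huij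
      by_cases hij : i = j
      · rw [hij]
      · have hw : Pi.single i (1 : ZMod 2) + Pi.single j 1 ∈ CZ := by
          refine condX _ (by rw [hammingWt_pair hij]) ?_
          intro c hc
          obtain ⟨r, hr⟩ := hspan c hc
          rw [bform_add_left, bform_single, bform_single, hr]
          simp only [Pi.smul_apply, smul_eq_mul, huij]
          exact (by decide : ∀ x : ZMod 2, x + x = 0) _
        have := ht _ hw
        rw [bform_comm, bform_add_left, bform_single, bform_single] at this
        exact zmod2_add_eq_zero _ _ this
    have C2 : ∀ i : Fin 6, u i = 0 → t i = 0 := by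
      intro i hui
      have hw : Pi.single i (1 : ZMod 2) ∈ CZ := by
        refine condX _ (by rw [hammingWt_single]; omega) ?_
        intro c hc
        obtain ⟨r, hr⟩ := hspan c hc
        rw [bform_single, hr]
        simp [hui]
      have := ht _ hw
      rwa [bform_comm, bform_single] at this
    obtain ⟨i0, hi0⟩ : ∃ i, u i ≠ 0 := by
      by_contra hc
      push_neg at hc
      exact hune (funext hc)
    have : t = t i0 • u := by
      funext i
      rcases zmod2_cases (u i) with h1 | h1
      · rw [C2 i h1]
        simp [h1]
      · have : t i = t i0 := C1 i i0 (h1.trans (zmod2_ne_zero _ hi0).symm)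
        rw [this]
        simp [h1]
    exact htn (this ▸ CX.smul_mem _ hu)
  · -- rank 2
    obtain ⟨u, v, hu, hv, hspan⟩ := span_two CX h
    have C1 : ∀ i j : Fin 6, u i = u j → v i = v j → t i = t j := by
      intro i j huij hvij
      by_cases hij : i = j
      · rw [hij]
      · have hw : Pi.single i (1 : ZMod 2) + Pi.single j 1 ∈ CZ := by
          refine condX _ (by rw [hammingWt_pair hij]) ?_
          intro c hc
          obtain ⟨r, s, hr⟩ := hspan c hc
          rw [bform_add_left, bform_single, bform_single, hr]
          simp only [Pi.add_apply, Pi.smul_apply, smul_eq_mul, huij, hvij]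
          exact (by decide : ∀ x : ZMod 2, x + x = 0) _
        have := ht _ hw
        rw [bform_comm, bform_add_left, bform_single, bform_single] at this
        exact zmod2_add_eq_zero _ _ this
    have C2 : ∀ i : Fin 6, u i = 0 → v i = 0 → t i = 0 := by
      intro i hui hvi
      have hw : Pi.single i (1 : ZMod 2) ∈ CZ := by
        refine condX _ (by rw [hammingWt_single]; omega) ?_
        intro c hc
        obtain ⟨r, s, hr⟩ := hspan c hc
        rw [bform_single, hr]
        simp [hui, hvi]
      have := ht _ hw
      rwa [bform_comm, bform_single] at this
    classical
    set A : ZMod 2 := if hA : ∃ i, u i = 1 ∧ v i = 0 then t hA.choose else 0 with hAdef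
    set B : ZMod 2 := if hB : ∃ i, u i = 0 ∧ v i = 1 then t hB.choose else 0 with hBdef
    set C : ZMod 2 := if hC : ∃ i, u i = 1 ∧ v i = 1 then t hC.choose else 0 with hCdef
    have hA : ∀ i, u i = 1 → v i = 0 → t i = A := by
      intro i h1 h2
      have hex : ∃ i, u i = 1 ∧ v i = 0 := ⟨i, h1, h2⟩
      rw [hAdef, dif_pos hex]
      exact C1 i hex.choose (h1.trans hex.choose_spec.1.symm) (h2.trans hex.choose_spec.2.symm)
    have hB : ∀ i, u i = 0 → v i = 1 → t i = B := by
      intro i h1 h2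
      have hex : ∃ i, u i = 0 ∧ v i = 1 := ⟨i, h1, h2⟩
      rw [hBdef, dif_pos hex]
      exact C1 i hex.choose (h1.trans hex.choose_spec.1.symm) (h2.trans hex.choose_spec.2.symm)
    have hC : ∀ i, u i = 1 → v i = 1 → t i = C := by
      intro i h1 h2
      have hex : ∃ i, u i = 1 ∧ v i = 1 := ⟨i, h1, h2⟩
      rw [hCdef, dif_pos hex]
      exact C1 i hex.choose (h1.trans hex.choose_spec.1.symm) (h2.trans hex.choose_spec.2.symm)
    have hkey : ∀ i, t i = A * u i + B * v i + (A + B + C) * (u i * v i) := by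
      intro i
      rcases zmod2_cases (u i) with h1 | h1 <;> rcases zmod2_cases (v i) with h2 | h2 <;>
        rw [h1, h2]
      · rw [C2 i h1 h2]
        exact (by decide : ∀ a b c : ZMod 2, (0:ZMod 2) = a*0+b*0+(a+b+c)*(0*0)) A B C
      · rw [hB i h1 h2]
        exact (by decide : ∀ a b c : ZMod 2, b = a*0+b*1+(a+b+c)*(0*1)) A B C
      · rw [hA i h1 h2]
        exact (by decide : ∀ a b c : ZMod 2, a = a*1+b*0+(a+b+c)*(1*0)) A B C
      · rw [hC i h1 h2]
        exact (by decide : ∀ a b c : ZMod 2, c = a*1+b*1+(a+b+c)*(1*1)) A B C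
    rcases zmod2_cases (A + B + C) with hγ | hγ
    · -- t would be in CX
      have : t = A • u + B • v := by
        funext i
        have := hkey i
        rw [hγ] at this
        simpa using this
      exact htn (this ▸ CX.add_mem (CX.smul_mem _ hu) (CX.smul_mem _ hv))
    · -- the interesting case: t ≡ u ∧ v mod CX
      set s : Fin 6 → ZMod 2 := fun i => u i * v i with hsdef
      have ht_eq : t = A • u + B • v + s := by
        funext i
        have := hkey i
        rw [hγ] at this
        simpa [hsdef] using this
      have hsnot : s ∉ CX := by
        intro hs
        exact htn (ht_eq ▸ CX.add_mem (CX.add_mem (CX.smul_mem _ hu) (CX.smul_mem _ hv)) hs)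
      have hs_eq : s = t + A • u + B • v := by
        funext i
        have := congrFun ht_eq i
        simp only [Pi.add_apply, Pi.smul_apply, smul_eq_mul] at this ⊢
        exact (by decide : ∀ a b x y ti si : ZMod 2,
          ti = a * x + b * y + si → si = ti + a * x + b * y) A B (u i) (v i) (t i) (s i) this
      have hsperp : ∀ c ∈ CZ, bform s c = 0 := by
        intro c hc
        rw [hs_eq, bform_add_left, bform_add_left, bform_smul_left, bform_smul_left,
          ht _ hc, horth u hu c hc, horth v hv c hc]
        ring
      -- three coset vectors with weight ≥ 3
      have wt3 : ∀ w : Fin 6 → ZMod 2, (∀ c ∈ CZ, bform w c = 0) → w ∉ CX → 3 ≤ hammingWt w := by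
        intro w hperp hnot
        by_contra hlt
        exact hnot (condZ w (by omega) hperp)
      have h11 : 3 ≤ hammingWt s := wt3 s hsperp hsnot
      have h10 : 3 ≤ hammingWt (u + s) := by
        refine wt3 _ (fun c hc => by
          rw [bform_add_left, horth u hu c hc, hsperp c hc]; ring) ?_
        intro hmem
        apply hsnot
        have : s = u + (u + s) := by
          funext i
          exact (by decide : ∀ x y : ZMod 2, y = x + (x + y)) (u i) (s i)
        rw [this]
        exact CX.add_mem hu hmem
      have h01 : 3 ≤ hammingWt (v + s) := by
        refine wt3 _ (fun c hc => by
          rw [bform_add_left, horth v hv c hc, hsperp c hc]; ring) ?_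
        intro hmem
        apply hsnot
        have : s = v + (v + s) := by
          funext i
          exact (by decide : ∀ x y : ZMod 2, y = x + (x + y)) (v i) (s i)
        rw [this]
        exact CX.add_mem hv hmem
      -- weight computations
      have e11 : hammingWt s = (Finset.univ.filter fun i => u i = 1 ∧ v i = 1).card := by
        refine hammingWt_eq_card _ _ fun i => ?_
        rcases zmod2_cases (u i) with h1 | h1 <;> rcases zmod2_cases (v i) with h2 | h2 <;>
          simp [hsdef, h1, h2, (by decide : (1 : ZMod 2) + 1 = 0)]
      have e10 : hammingWt (u + s) = (Finset.univ.filter fun i => u i = 1 ∧ v i = 0).card := by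
        refine hammingWt_eq_card _ _ fun i => ?_
        rcases zmod2_cases (u i) with h1 | h1 <;> rcases zmod2_cases (v i) with h2 | h2 <;>
          simp [hsdef, h1, h2, (by decide : (1 : ZMod 2) + 1 = 0)]
      have e01 : hammingWt (v + s) = (Finset.univ.filter fun i => u i = 0 ∧ v i = 1).card := by
        refine hammingWt_eq_card _ _ fun i => ?_
        rcases zmod2_cases (u i) with h1 | h1 <;> rcases zmod2_cases (v i) with h2 | h2 <;>
          simp [hsdef, h1, h2, (by decide : (1 : ZMod 2) + 1 = 0)]
      -- disjoint counting
      have hd1 : Disjoint (Finset.univ.filter fun i => u i = 1 ∧ v i = 1)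
          (Finset.univ.filter fun i => u i = 1 ∧ v i = 0) := by
        rw [Finset.disjoint_left]
        intro i hi1 hi2
        simp only [Finset.mem_filter] at hi1 hi2
        rw [hi1.2.2] at hi2
        exact (by decide : (1 : ZMod 2) ≠ 0) hi2.2.2
      have hd2 : Disjoint ((Finset.univ.filter fun i => u i = 1 ∧ v i = 1) ∪
          (Finset.univ.filter fun i => u i = 1 ∧ v i = 0))
          (Finset.univ.filter fun i => u i = 0 ∧ v i = 1) := by
        rw [Finset.disjoint_left]
        intro i hi1 hi2
        simp only [Finset.mem_union, Finset.mem_filter] at hi1 hi2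
        rcases hi1 with h' | h' <;> rw [h'.2.1] at hi2 <;>
          exact (by decide : (1 : ZMod 2) ≠ 0) hi2.2.1
      have hcards : (Finset.univ.filter fun i => u i = 1 ∧ v i = 1).card +
          (Finset.univ.filter fun i => u i = 1 ∧ v i = 0).card +
          (Finset.univ.filter fun i => u i = 0 ∧ v i = 1).card ≤ 6 := by
        rw [← Finset.card_union_of_disjoint hd1, ← Finset.card_union_of_disjoint hd2]
        have := Finset.card_le_univ ((Finset.univ.filter fun i => u i = 1 ∧ v i = 1) ∪
          (Finset.univ.filter fun i => u i = 1 ∧ v i = 0) ∪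
          (Finset.univ.filter fun i => u i = 0 ∧ v i = 1))
        simpa using this
      omega

/-- There is no CSS stabilizer code on six qubits encoding one logical qubit
that corrects an arbitrary single-qubit error. -/
theorem no_six_qubit_CSS_code :
    ¬ ∃ (CX CZ : Submodule (ZMod 2) (Fin 6 → ZMod 2)),
      (∀ a ∈ CX, ∀ b ∈ CZ, bform a b = 0) ∧
      Module.finrank (ZMod 2) CX + Module.finrank (ZMod 2) CZ = 5 ∧
      (∀ v : Fin 6 → ZMod 2, hammingWt v ≤ 2 →
        (∀ c ∈ CZ, bform v c = 0) → v ∈ CX) ∧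
      (∀ v : Fin 6 → ZMod 2, hammingWt v ≤ 2 →
        (∀ c ∈ CX, bform v c = 0) → v ∈ CZ) := by
  rintro ⟨CX, CZ, horth, hrk, condZ, condX⟩
  by_cases h : finrank (ZMod 2) CX ≤ 2
  · exact main_lemma CX CZ horth hrk condZ condX h
  · refine main_lemma CZ CX (fun a ha b hb => by rw [bform_comm]; exact horth b hb a ha)
      (by omega) condX condZ (by omega)
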